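/- The matrix Z(0) = I_s − (Σ_{p=1}^c n_{jp}(m_p − n_{ip})/α_p)_{i,j} is singular: det Z(0) = 0. -/

import Mathlib

open Finset

/-- `m_p = |V(T_p)|`: the number of vertices of `K_{n_1,…,n_s}` lying in the `p`-th component
of a spanning forest, where `comp` sends each vertex to the index of its component. -/
noncomputable def mP {s c : ℕ} (n : Fin s → ℕ) (comp : (Σ i, Fin (n i)) → Fin c)
    (p : Fin c) : ℕ :=
  Nat.card {v : Σ i, Fin (n i) // comp v = p}

/-- `n_{ip} = |X_i ∩ V(T_p)|`: the number of vertices of the `i`-th partition class lying in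
the `p`-th component. -/
noncomputable def nIP {s c : ℕ} (n : Fin s → ℕ) (comp : (Σ i, Fin (n i)) → Fin c)
    (i : Fin s) (p : Fin c) : ℕ :=
  Nat.card {v : Σ i, Fin (n i) // v.1 = i ∧ comp v = p}

/-- `α_p = n·m_p − Σ_i n_i·n_{ip}` (as a real number). -/
noncomputable def alphaR {s c : ℕ} (n : Fin s → ℕ) (comp : (Σ i, Fin (n i)) → Fin c)
    (p : Fin c) : ℝ :=
  (∑ i, (n i : ℝ)) * (mP n comp p) - ∑ i, (n i : ℝ) * (nIP n comp i p)

/-- The matrix `Z(0) = I_s − (Σ_p n_{jp}(m_p − n_{ip})/α_p)_{i,j}`. -/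
noncomputable def Zzero {s c : ℕ} (n : Fin s → ℕ) (comp : (Σ i, Fin (n i)) → Fin c) :
    Matrix (Fin s) (Fin s) ℝ :=
  1 - Matrix.of fun i j =>
    ∑ p, (nIP n comp j p : ℝ) * ((mP n comp p : ℝ) - (nIP n comp i p : ℝ)) / alphaR n comp p

section Aux

variable {s c : ℕ} (n : Fin s → ℕ) (comp : (Σ i, Fin (n i)) → Fin c)

lemma mP_eq (p : Fin c) :
    mP n comp p = (univ.filter fun v : Σ i, Fin (n i) => comp v = p).card := by
  rw [mP, Nat.card_eq_fintype_card, Fintype.card_subtype]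

lemma nIP_eq (i : Fin s) (p : Fin c) :
    nIP n comp i p = (univ.filter fun v : Σ i, Fin (n i) => v.1 = i ∧ comp v = p).card := by
  rw [nIP, Nat.card_eq_fintype_card, Fintype.card_subtype]

lemma sum_nIP (j : Fin s) : ∑ p, nIP n comp j p = n j := by
  have h1 : (univ.filter fun v : Σ i, Fin (n i) => v.1 = j).card
      = ∑ p, nIP n comp j p := by
    rw [Finset.card_eq_sum_card_fiberwise (f := comp) (t := univ) (fun x _ => mem_univ _)]
    refine Finset.sum_congr rfl fun p _ => ?_
    rw [nIP_eq, Finset.filter_filter]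
  have h2 : (univ.filter fun v : Σ i, Fin (n i) => v.1 = j).card = n j := by
    rw [← Fintype.card_subtype]
    rw [Fintype.card_congr
      (⟨fun v => v.2 ▸ v.1.2, fun x => ⟨⟨j, x⟩, rfl⟩,
        by rintro ⟨⟨i, x⟩, rfl⟩; rfl, fun x => rfl⟩ :
        {v : Σ i, Fin (n i) // v.1 = j} ≃ Fin (n j))]
    exact Fintype.card_fin _
  omega

lemma nIP_le_mP (i : Fin s) (p : Fin c) : nIP n comp i p ≤ mP n comp p := by
  rw [nIP_eq, mP_eq]
  refine Finset.card_le_card ?_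
  intro v hv
  simp only [Finset.mem_filter] at hv ⊢
  exact ⟨hv.1, hv.2.2⟩

lemma alphaR_eq (p : Fin c) :
    alphaR n comp p = ∑ i, (n i : ℝ) * ((mP n comp p : ℝ) - (nIP n comp i p : ℝ)) := by
  rw [alphaR]
  rw [Finset.sum_mul]
  rw [← Finset.sum_sub_distrib]
  refine Finset.sum_congr rfl fun i _ => by ring

lemma alphaR_pos (hs : 2 ≤ s) (hn : ∀ i, 1 ≤ n i) (hsurj : Function.Surjective comp)
    (p : Fin c) : 0 < alphaR n comp p := by
  obtain ⟨v, hv⟩ := hsurj p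
  set i0 := v.1 with hi0
  -- find i1 ≠ i0
  haveI : Nontrivial (Fin s) := Fin.nontrivial_iff_two_le.mpr hs
  obtain ⟨i1, hne⟩ := exists_ne i0
  have hkey : nIP n comp i1 p + 1 ≤ mP n comp p := by
    rw [nIP_eq, mP_eq]
    have hdisj : Disjoint (univ.filter fun w : Σ i, Fin (n i) => w.1 = i1 ∧ comp w = p)
        (univ.filter fun w : Σ i, Fin (n i) => w.1 = i0 ∧ comp w = p) := by
      rw [Finset.disjoint_filter]
      rintro w _ ⟨h1, _⟩ ⟨h2, _⟩
      exact hne (h1 ▸ h2 ▸ rfl)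
    have hsub : (univ.filter fun w : Σ i, Fin (n i) => w.1 = i1 ∧ comp w = p)
        ∪ (univ.filter fun w : Σ i, Fin (n i) => w.1 = i0 ∧ comp w = p)
        ⊆ univ.filter fun w : Σ i, Fin (n i) => comp w = p := by
      intro w hw
      simp only [Finset.mem_union, Finset.mem_filter] at hw ⊢
      rcases hw with ⟨_, _, h⟩ | ⟨_, _, h⟩ <;> exact ⟨mem_univ _, h⟩
    have h0 : 1 ≤ (univ.filter fun w : Σ i, Fin (n i) => w.1 = i0 ∧ comp w = p).card := by
      rw [Finset.one_le_card]
      exact ⟨v, by simp [hv, hi0]⟩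
    calc (univ.filter fun w : Σ i, Fin (n i) => w.1 = i1 ∧ comp w = p).card + 1
        ≤ (univ.filter fun w : Σ i, Fin (n i) => w.1 = i1 ∧ comp w = p).card
          + (univ.filter fun w : Σ i, Fin (n i) => w.1 = i0 ∧ comp w = p).card := by omega
      _ = ((univ.filter fun w : Σ i, Fin (n i) => w.1 = i1 ∧ comp w = p)
          ∪ (univ.filter fun w : Σ i, Fin (n i) => w.1 = i0 ∧ comp w = p)).card := by
          rw [Finset.card_union_of_disjoint hdisj]
      _ ≤ _ := Finset.card_le_card hsub
  rw [alphaR_eq]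
  have hterm : ∀ i ∈ univ, (0:ℝ) ≤ (n i : ℝ) * ((mP n comp p : ℝ) - (nIP n comp i p : ℝ)) := by
    intro i _
    have := nIP_le_mP n comp i p
    have h' : (nIP n comp i p : ℝ) ≤ (mP n comp p : ℝ) := by exact_mod_cast this
    exact mul_nonneg (Nat.cast_nonneg _) (by linarith)
  have hpos : (0:ℝ) < (n i1 : ℝ) * ((mP n comp p : ℝ) - (nIP n comp i1 p : ℝ)) := by
    have h1 : (1:ℝ) ≤ (n i1 : ℝ) := by exact_mod_cast hn i1
    have h2 : (nIP n comp i1 p : ℝ) + 1 ≤ (mP n comp p : ℝ) := by exact_mod_cast hkey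
    nlinarith
  calc (0:ℝ) < (n i1 : ℝ) * ((mP n comp p : ℝ) - (nIP n comp i1 p : ℝ)) := hpos
    _ ≤ ∑ i, (n i : ℝ) * ((mP n comp p : ℝ) - (nIP n comp i p : ℝ)) :=
      Finset.single_le_sum hterm (mem_univ i1)

end Aux

/-- The matrix `Z(0)` is singular: `det Z(0) = 0`. -/
theorem stmt_10 (s : ℕ) (hs : 2 ≤ s) (n : Fin s → ℕ) (hn : ∀ i, 1 ≤ n i)
    (F : SimpleGraph (Σ i, Fin (n i)))
    (hFG : F ≤ SimpleGraph.completeMultipartiteGraph (fun i => Fin (n i)))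
    (hF : F.IsAcyclic)
    (c : ℕ) (comp : (Σ i, Fin (n i)) → Fin c)
    (hcomp : ∀ u v, comp u = comp v ↔ F.Reachable u v)
    (hsurj : Function.Surjective comp) :
    (Zzero n comp).det = 0 := by
  haveI : NeZero s := ⟨by omega⟩
  rw [← Matrix.exists_vecMul_eq_zero_iff]
  refine ⟨fun i => (n i : ℝ), ?_, ?_⟩
  · intro h
    have := congrFun h 0
    simp only [Pi.zero_apply] at this
    have h1 : 1 ≤ n 0 := hn 0
    have : (n (0 : Fin s) : ℝ) = 0 := this
    have : n (0 : Fin s) = 0 := by exact_mod_cast this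
    omega
  · funext j
    have halpha : ∀ p, alphaR n comp p ≠ 0 :=
      fun p => ne_of_gt (alphaR_pos n comp hs hn hsurj p)
    simp only [Matrix.vecMul, dotProduct, Zzero, Matrix.sub_apply, Matrix.one_apply,
      Matrix.of_apply, Pi.zero_apply]
    have hsplit : ∑ i, (n i : ℝ) * ((if i = j then (1:ℝ) else 0)
        - ∑ p, (nIP n comp j p : ℝ) * ((mP n comp p : ℝ) - (nIP n comp i p : ℝ)) / alphaR n comp p)
        = (∑ i, (n i : ℝ) * (if i = j then (1:ℝ) else 0))
        - ∑ i, (n i : ℝ) * ∑ p, (nIP n comp j p : ℝ) * ((mP n comp p : ℝ) - (nIP n comp i p : ℝ))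
            / alphaR n comp p := by
      rw [← Finset.sum_sub_distrib]
      exact Finset.sum_congr rfl fun i _ => by ring
    rw [hsplit]
    have h1 : ∑ i, (n i : ℝ) * (if i = j then (1:ℝ) else 0) = (n j : ℝ) := by
      simp [Finset.sum_ite_eq']
    have h2 : ∑ i, (n i : ℝ) * ∑ p, (nIP n comp j p : ℝ)
        * ((mP n comp p : ℝ) - (nIP n comp i p : ℝ)) / alphaR n comp p = (n j : ℝ) := by
      have : ∀ i, (n i : ℝ) * ∑ p, (nIP n comp j p : ℝ)
          * ((mP n comp p : ℝ) - (nIP n comp i p : ℝ)) / alphaR n comp p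
          = ∑ p, (nIP n comp j p : ℝ) / alphaR n comp p
            * ((n i : ℝ) * ((mP n comp p : ℝ) - (nIP n comp i p : ℝ))) := by
        intro i
        rw [Finset.mul_sum]
        exact Finset.sum_congr rfl fun p _ => by ring
      simp_rw [this]
      rw [Finset.sum_comm]
      have : ∀ p, ∑ i, (nIP n comp j p : ℝ) / alphaR n comp p
          * ((n i : ℝ) * ((mP n comp p : ℝ) - (nIP n comp i p : ℝ)))
          = (nIP n comp j p : ℝ) := by
        intro p
        rw [← Finset.mul_sum, ← alphaR_eq, div_mul_cancel₀]
        exact halpha p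
      simp_rw [this]
      have := sum_nIP n comp j
      exact_mod_cast this
    rw [h1, h2, sub_self]
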